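/- Let W be a standard Brownian motion, and fix μ ∈ ℝ, σ > 0, a confidence level η ∈ (0,1), and ε ∈ (0,1). Then almost surely the following holds: for every solution Q of the one-armed Thompson sampling limit ODE driven by the path W(ω) with parameters (μ, σ, 0), defining the sampling probability π(t) = Φ((μ·Q(t) + W_{Q(t)}(ω)) / (σ·√(Q(t)))) for t ∈ (0, ε), one has sup_{t ∈ (0,ε)} π(t) ≥ 1 − η and inf_{t ∈ (0,ε)} π(t) ≤ η. -/

import Mathlib

open MeasureTheory ProbabilityTheory Filter Set

/-- The standard normal distribution function `Φ`. -/
noncomputable def Phi (x : ℝ) : ℝ :=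
  ∫ s in Set.Iic x, (Real.sqrt (2 * Real.pi))⁻¹ * Real.exp (-s ^ 2 / 2)

/-- `W` is a standard Brownian motion under `P`: continuous sample paths, `W₀ = 0`,
Gaussian increments `W_t - W_s ~ N(0, t - s)`, and independent increments. -/
def IsStdBM {Ω : Type*} [MeasurableSpace Ω] (P : Measure Ω) (W : ℝ → Ω → ℝ) : Prop :=
  (∀ ω, Continuous fun t => W t ω) ∧
  (∀ ω, W 0 ω = 0) ∧
  (∀ s t : ℝ, 0 ≤ s → s < t →
    Measure.map (fun ω => W t ω - W s ω) P = gaussianReal 0 (Real.toNNReal (t - s))) ∧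
  (∀ (n : ℕ) (t : Fin (n + 1) → ℝ), (∀ i, 0 ≤ t i) → StrictMono t →
    iIndepFun
      (fun i : Fin n => fun ω => W (t i.succ) ω - W (t i.castSucc) ω) P)

/-- A solution of the one-armed Thompson sampling limit ODE driven by `w`
with parameters `(μ, σ, c)`: a continuous nondecreasing `Q : [0,1] → ℝ` with `Q 0 = 0`,
`Q t > 0` on `(0,1]`, differentiable on `(0,1]` with
`Q'(t) = Φ((μ Q t + w (Q t)) / (σ √(Q t + σ² c)))`. -/
def IsOneArmSol (w : ℝ → ℝ) (μ σ c : ℝ) (Q : ℝ → ℝ) : Prop :=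
  ContinuousOn Q (Set.Icc 0 1) ∧ MonotoneOn Q (Set.Icc 0 1) ∧ Q 0 = 0 ∧
  (∀ t ∈ Set.Ioc (0:ℝ) 1, 0 < Q t) ∧
  (∀ t ∈ Set.Ioc (0:ℝ) 1,
    HasDerivWithinAt Q
      (Phi ((μ * Q t + w (Q t)) / (σ * Real.sqrt (Q t + σ ^ 2 * c)))) (Set.Icc 0 1) t)

namespace OneArm

/-! ### Properties of the standard normal c.d.f. `Phi` -/

lemma pdf_eq : (fun s : ℝ => (Real.sqrt (2 * Real.pi))⁻¹ * Real.exp (-s ^ 2 / 2))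
    = gaussianPDFReal 0 1 := by
  funext s
  simp [gaussianPDFReal]

lemma Phi_eq (x : ℝ) : Phi x = ∫ s in Set.Iic x, gaussianPDFReal 0 1 s := by
  rw [Phi, pdf_eq]

lemma Phi_nonneg (x : ℝ) : 0 ≤ Phi x := by
  rw [Phi_eq]
  exact setIntegral_nonneg measurableSet_Iic fun s _ => gaussianPDFReal_nonneg 0 1 s

lemma Phi_mono : Monotone Phi := by
  intro a b hab
  rw [Phi_eq, Phi_eq]
  exact setIntegral_mono_set (integrable_gaussianPDFReal 0 1).integrableOn
    (ae_of_all _ fun s => gaussianPDFReal_nonneg 0 1 s)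
    (HasSubset.Subset.eventuallyLE (Iic_subset_Iic.2 hab))

lemma Phi_le_one (x : ℝ) : Phi x ≤ 1 := by
  rw [Phi_eq, ← integral_gaussianPDFReal_eq_one 0 one_ne_zero]
  exact setIntegral_le_integral (integrable_gaussianPDFReal 0 1)
    (ae_of_all _ fun s => gaussianPDFReal_nonneg 0 1 s)

lemma Phi_pos (x : ℝ) : 0 < Phi x := by
  rw [Phi_eq]
  rw [setIntegral_pos_iff_support_of_nonneg_ae
    (ae_of_all _ fun s => gaussianPDFReal_nonneg 0 1 s)
    (integrable_gaussianPDFReal 0 1).integrableOn]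
  have hs : Function.support (gaussianPDFReal 0 1) ∩ Set.Iic x = Set.Iic x :=
    Set.inter_eq_right.2 fun s _ => (gaussianPDFReal_pos 0 1 s one_ne_zero).ne'
  rw [hs, Real.volume_Iic]
  exact ENNReal.zero_lt_top

lemma Phi_neg (x : ℝ) : Phi (-x) = 1 - Phi x := by
  have heven : ∀ s : ℝ, gaussianPDFReal 0 1 (-s) = gaussianPDFReal 0 1 s := by
    intro s; simp [gaussianPDFReal, neg_sq]
  have h1 : (∫ s in Set.Iic (-x), gaussianPDFReal 0 1 (-s))
      = ∫ s in Set.Ioi x, gaussianPDFReal 0 1 s := by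
    simpa using integral_comp_neg_Iic (-x) (gaussianPDFReal 0 1)
  have h2 : Phi (-x) = ∫ s in Set.Ioi x, gaussianPDFReal 0 1 s := by
    rw [Phi_eq, ← h1]
    exact setIntegral_congr_fun measurableSet_Iic fun s _ => (heven s).symm
  have h3 : Phi x + Phi (-x) = 1 := by
    rw [h2, Phi_eq, intervalIntegral.integral_Iic_add_Ioi
      (integrable_gaussianPDFReal 0 1).integrableOn
      (integrable_gaussianPDFReal 0 1).integrableOn, integral_gaussianPDFReal_eq_one 0 one_ne_zero]
  linarith

lemma Phi_lt_one (x : ℝ) : Phi x < 1 := by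
  have := Phi_pos (-x)
  rw [Phi_neg] at this
  linarith

lemma ofReal_Phi (x : ℝ) : ENNReal.ofReal (Phi x) = gaussianReal 0 1 (Set.Iic x) := by
  rw [gaussianReal_apply_eq_integral 0 one_ne_zero, Phi_eq]

lemma Phi_toReal (x : ℝ) : Phi x = (gaussianReal 0 1 (Set.Iic x)).toReal := by
  rw [← ofReal_Phi, ENNReal.toReal_ofReal (Phi_nonneg x)]

lemma tendsto_Phi_atTop : Tendsto Phi atTop (nhds 1) := by
  have h := tendsto_measure_Iic_atTop (gaussianReal 0 1)
  rw [measure_univ] at h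
  have h2 := (ENNReal.tendsto_toReal (by norm_num : (1 : ENNReal) ≠ ⊤)).comp h
  simp only [Function.comp_def, ENNReal.toReal_one] at h2
  refine h2.congr fun x => (Phi_toReal x).symm

lemma tendsto_Phi_atBot : Tendsto Phi atBot (nhds 0) := by
  have h1 : Tendsto (fun y : ℝ => Phi (-y)) atBot (nhds 1) :=
    tendsto_Phi_atTop.comp tendsto_neg_atBot_atTop
  have h2 : Tendsto (fun y : ℝ => 1 - Phi (-y)) atBot (nhds (1 - 1)) :=
    tendsto_const_nhds.sub h1
  norm_num at h2
  refine h2.congr fun y => ?_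
  rw [← Phi_neg, neg_neg]

lemma gaussianReal_Iic' {v : NNReal} (hv : v ≠ 0) (c : ℝ) :
    gaussianReal 0 v (Set.Iic c) = ENNReal.ofReal (Phi (c / Real.sqrt v)) := by
  have hv' : (0 : ℝ) < v := lt_of_le_of_ne v.coe_nonneg (by exact_mod_cast hv.symm)
  have hs : (0 : ℝ) < Real.sqrt v := Real.sqrt_pos.2 hv'
  have hmap : (gaussianReal 0 1).map (fun y => (Real.sqrt v) * y) = gaussianReal 0 v := by
    have h := gaussianReal_map_const_mul (μ := 0) (v := 1) (Real.sqrt v)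
    simp only [mul_zero] at h
    rw [h]
    congr 1
    ext
    push_cast
    rw [Real.sq_sqrt v.coe_nonneg, mul_one]
  rw [← hmap, Measure.map_apply (measurable_const_mul _) measurableSet_Iic]
  have hpre : (fun y => Real.sqrt v * y) ⁻¹' Set.Iic c = Set.Iic (c / Real.sqrt v) := by
    ext y
    simp only [Set.mem_preimage, Set.mem_Iic]
    rw [le_div_iff₀ hs, mul_comm]
  rw [hpre, ← ofReal_Phi]

lemma gaussianReal_Iio' {v : NNReal} (hv : v ≠ 0) (c : ℝ) :
    gaussianReal 0 v (Set.Iio c) = ENNReal.ofReal (Phi (c / Real.sqrt v)) := by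
  rw [← gaussianReal_Iic' hv c]
  exact measure_congr
    (Iio_ae_eq_Iic' ((gaussianReal_absolutelyContinuous 0 hv) (measure_singleton c)))

/-! ### Probability layer -/

variable {Ω : Type*} [MeasurableSpace Ω] {P : Measure Ω}

lemma gaussian_lt {X : Ω → ℝ} {v : NNReal} (hv : v ≠ 0)
    (hX : Measure.map X P = gaussianReal 0 v) (c : ℝ) :
    P (X ⁻¹' Set.Iio c) = ENNReal.ofReal (Phi (c / Real.sqrt v)) := by
  have hXm : AEMeasurable X P := aemeasurable_of_map_neZero (by rw [hX]; infer_instance)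
  rw [← Measure.map_apply_of_aemeasurable hXm measurableSet_Iio, hX, gaussianReal_Iio' hv]

lemma _root_.IsStdBM.law {W : ℝ → Ω → ℝ} (hW : IsStdBM P W) {y : ℝ} (hy : 0 < y) :
    Measure.map (fun ω => W y ω) P = gaussianReal 0 (Real.toNNReal y) := by
  have h := hW.2.2.1 0 y le_rfl hy
  simp only [hW.2.1, sub_zero] at h
  exact h

lemma _root_.IsStdBM.neg {W : ℝ → Ω → ℝ} (hW : IsStdBM P W) :
    IsStdBM P (fun t ω => -(W t ω)) := by
  obtain ⟨hc, h0, hinc, hind⟩ := hW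
  refine ⟨fun ω => (hc ω).neg, fun ω => by simp [h0 ω], ?_, ?_⟩
  · intro s t hs hst
    have h := hinc s t hs hst
    have hm : AEMeasurable (fun ω => W t ω - W s ω) P :=
      aemeasurable_of_map_neZero (by rw [h]; infer_instance)
    have hfun : (fun ω => -(W t ω) - -(W s ω))
        = (fun x : ℝ => -x) ∘ (fun ω => W t ω - W s ω) := by
      funext ω; simp [Function.comp]; ring
    rw [hfun, ← AEMeasurable.map_map_of_aemeasurable measurable_neg.aemeasurable hm, h]
    have hneg : (Neg.neg : ℝ → ℝ) = (fun x : ℝ => (-1 : ℝ) * x) := by funext x; ring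
    rw [hneg, gaussianReal_map_const_mul]
    norm_num
  · intro n t ht hmono
    have h := (hind n t ht hmono).comp (fun _ => fun x : ℝ => -x) (fun _ => measurable_neg)
    convert h using 1
    funext i ω
    simp [Function.comp]
    ring

/-- Almost surely, for every `K` there are arbitrarily small `y > 0` with
`W y ≥ K √y`. -/
lemma crossing {W : ℝ → Ω → ℝ} (hW : IsStdBM P W) :
    ∀ᵐ ω ∂P, ∀ (K : ℕ) (δ : ℝ), 0 < δ →
      ∃ y : ℝ, 0 < y ∧ y < δ ∧ (K : ℝ) * Real.sqrt y ≤ W y ω := by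
  have hinc := hW.2.2.1
  have hind := hW.2.2.2
  have main : ∀ K j : ℕ, ∀ᵐ ω ∂P,
      ∃ y : ℝ, 0 < y ∧ y < 1 / (j + 1 : ℝ) ∧ ((K : ℝ) + 1) * Real.sqrt y ≤ W y ω := by
    intro K j
    set k : ℝ := (K : ℝ) + 1 with hk
    have hk1 : 1 ≤ k := by
      rw [hk]; have : (0:ℝ) ≤ (K:ℝ) := Nat.cast_nonneg K; linarith
    set δ0 : ℝ := 1 / (j + 1 : ℝ) with hδ0
    have hδ0pos : 0 < δ0 := by rw [hδ0]; positivity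
    -- choose the scale ratios
    have hchoice : ∀ n : ℕ, ∃ R : ℝ, 2 ≤ R ∧ Phi (-(k * Real.sqrt R)) ≤ (1 / 2 : ℝ) ^ (n + 2) := by
      intro n
      have hεp : (0 : ℝ) < (1 / 2 : ℝ) ^ (n + 2) := by positivity
      have hev : ∀ᶠ z in atBot, Phi z < (1 / 2 : ℝ) ^ (n + 2) :=
        tendsto_Phi_atBot.eventually (gt_mem_nhds hεp)
      obtain ⟨y, hy⟩ := eventually_atBot.1 hev
      refine ⟨max 2 (y ^ 2 + 1), le_max_left _ _, ?_⟩
      have hsR : |y| ≤ Real.sqrt (max 2 (y ^ 2 + 1)) := by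
        rw [← Real.sqrt_sq_eq_abs]
        exact Real.sqrt_le_sqrt (le_trans (by nlinarith) (le_max_right _ _))
      have h1 : -(k * Real.sqrt (max 2 (y ^ 2 + 1))) ≤ y := by
        have h2 : Real.sqrt (max 2 (y ^ 2 + 1)) ≤ k * Real.sqrt (max 2 (y ^ 2 + 1)) := by
          nlinarith [Real.sqrt_nonneg (max 2 (y ^ 2 + 1))]
        have h3 : -y ≤ |y| := neg_le_abs y
        nlinarith
      exact (hy _ h1).le
    choose ρ hρ2 hρPhi using hchoice
    -- the scale sequence
    set x : ℕ → ℝ := fun n => Nat.rec (δ0 / 2) (fun m xm => xm / ρ m) n with hxdef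
    have hxsucc : ∀ n, x (n + 1) = x n / ρ n := fun n => rfl
    have hx0 : ∀ n, 0 < x n := by
      intro n
      induction n with
      | zero => show (0:ℝ) < δ0 / 2; positivity
      | succ m ih => rw [hxsucc]; exact div_pos ih (by linarith [hρ2 m])
    have hxdec : ∀ n, x (n + 1) < x n := by
      intro n
      rw [hxsucc]
      exact div_lt_self (hx0 n) (by linarith [hρ2 n])
    have hxlt : ∀ n, x n < δ0 := by
      intro n
      induction n with
      | zero => show δ0 / 2 < δ0; linarith
      | succ m ih => exact (hxdec m).trans ih
    have hxhalf : ∀ n, 2 * x (n + 1) ≤ x n := by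
      intro n
      have h1 : x n / ρ n ≤ x n / 2 :=
        div_le_div_of_nonneg_left (hx0 n).le two_pos (hρ2 n)
      rw [hxsucc]
      linarith
    -- failure set
    set F : Set Ω := {ω | ∀ n : ℕ, W (x n) ω < k * Real.sqrt (x n)} with hF
    have hPF : P F = 0 := by
      have key : ∀ ζ : ℝ, 0 < ζ → P F ≤ ENNReal.ofReal ζ := by
        intro ζ hζ
        obtain ⟨N, hN⟩ := exists_pow_lt_of_lt_one (by linarith : (0:ℝ) < ζ / 2)
          (by norm_num : (1/2 : ℝ) < 1)
        set b : ℝ := 2 * k * Real.sqrt 2 with hb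
        obtain ⟨M, hM⟩ := exists_pow_lt_of_lt_one (by linarith : (0:ℝ) < ζ / 2) (Phi_lt_one b)
        set A : ℕ → Set Ω :=
          fun n => {ω | 2 * k * Real.sqrt (x n) ≤ W (x n) ω - W (x (n + 1)) ω} with hA
        set B : ℕ → Set Ω := fun n => {ω | W (x (n + 1)) ω < -(k * Real.sqrt (x n))} with hB
        have hsub : F ⊆ (⋂ i : Fin M, (A (N + i.val))ᶜ) ∪ (⋃ i : Fin M, B (N + i.val)) := by
          intro ω hω
          simp only [hF, Set.mem_setOf_eq] at hω
          by_cases hBc : ∃ i : Fin M, ω ∈ B (N + i.val)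
          · exact Or.inr (Set.mem_iUnion.2 hBc)
          · push_neg at hBc
            refine Or.inl (Set.mem_iInter.2 fun i => ?_)
            intro hAi
            have h1 : ¬ (W (x (N + i.val + 1)) ω < -(k * Real.sqrt (x (N + i.val)))) := by
              have := hBc i
              simpa [hB] using this
            have h2 : 2 * k * Real.sqrt (x (N + i.val)) ≤
                W (x (N + i.val)) ω - W (x (N + i.val + 1)) ω := by
              simpa [hA] using hAi
            have h3 := hω (N + i.val)
            push_neg at h1
            have h4 : 2 * k * Real.sqrt (x (N + i.val))
                = 2 * (k * Real.sqrt (x (N + i.val))) := by ring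
            linarith
        refine le_trans (measure_mono hsub) (le_trans (measure_union_le _ _) ?_)
        -- product term
        have hterm1 : P (⋂ i : Fin M, (A (N + i.val))ᶜ) ≤ ENNReal.ofReal (ζ / 2) := by
          set t : Fin (M + 1) → ℝ := fun i => x (N + (M - i.val)) with htdef
          have ht0 : ∀ i, 0 ≤ t i := fun i => (hx0 _).le
          have hxanti : StrictAnti x := strictAnti_nat_of_succ_lt hxdec
          have htmono : StrictMono t := by
            intro i j hij
            have h1 : i.val < j.val := hij
            have h2 : j.val < M + 1 := j.isLt
            exact hxanti (by omega : N + (M - j.val) < N + (M - i.val))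
          have hZ := hind M t ht0 htmono
          set g : Fin M → ℕ := fun i => N + (M - (i.val + 1)) with hg
          have e1 : ∀ i : Fin M, t i.succ = x (g i) := fun i => rfl
          have e2 : ∀ i : Fin M, t i.castSucc = x (g i + 1) := by
            intro i
            have hidx : N + (M - (i.castSucc : Fin (M + 1)).val) = g i + 1 := by
              simp only [hg, Fin.coe_castSucc]
              have := i.isLt
              omega
            show x (N + (M - (i.castSucc : Fin (M + 1)).val)) = x (g i + 1)
            rw [hidx]
          have hZfun : ∀ i : Fin M,
              (fun ω => W (t i.succ) ω - W (t i.castSucc) ω)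
              = fun ω => W (x (g i)) ω - W (x (g i + 1)) ω := by
            intro i
            funext ω
            rw [e1 i, e2 i]
          set s' : Fin M → Set Ω := fun i =>
            (fun ω => W (x (g i)) ω - W (x (g i + 1)) ω) ⁻¹'
              Set.Iio (2 * k * Real.sqrt (x (g i))) with hs'
          have hcard : ∀ (pred : ℕ → Prop),
              (∀ i : Fin M, pred (N + i.val)) ↔ (∀ i : Fin M, pred (g i)) := by
            intro pred
            constructor
            · intro h i
              have hlt : M - (i.val + 1) < M := by have := i.isLt; omega
              have := h ⟨M - (i.val + 1), hlt⟩
              simpa only [hg] using this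
            · intro h i
              have hlt : M - (i.val + 1) < M := by have := i.isLt; omega
              have h5 := h ⟨M - (i.val + 1), hlt⟩
              have he : g ⟨M - (i.val + 1), hlt⟩ = N + i.val := by
                simp only [hg]
                have := i.isLt
                omega
              rwa [he] at h5
          have hinter : (⋂ i : Fin M, (A (N + i.val))ᶜ) = ⋂ i : Fin M, s' i := by
            ext ω
            simp only [Set.mem_iInter, Set.mem_compl_iff, hA, Set.mem_setOf_eq, not_le, hs',
              Set.mem_preimage, Set.mem_Iio]
            exact hcard (fun n => W (x n) ω - W (x (n + 1)) ω < 2 * k * Real.sqrt (x n))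
          rw [hinter]
          have hms : ∀ i : Fin M, MeasurableSet[MeasurableSpace.comap
              ((fun i : Fin M => fun ω => W (t i.succ) ω - W (t i.castSucc) ω) i)
              (inferInstance : MeasurableSpace ℝ)] (s' i) := by
            intro i
            refine ⟨Set.Iio (2 * k * Real.sqrt (x (g i))), measurableSet_Iio, ?_⟩
            rw [hs']
            simp only
            rw [hZfun i]
          have hprodeq := hZ.meas_iInter hms
          rw [hprodeq]
          have hfac : ∀ i : Fin M, P (s' i) ≤ ENNReal.ofReal (Phi b) := by
            intro i
            have hd : 0 < x (g i) - x (g i + 1) := by linarith [hxdec (g i)]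
            have hvne : (x (g i) - x (g i + 1)).toNNReal ≠ 0 := by
              rw [ne_eq, Real.toNNReal_eq_zero]
              push_neg
              linarith
            have hlaw := hinc (x (g i + 1)) (x (g i)) (hx0 (g i + 1)).le (hxdec (g i))
            have hPs := gaussian_lt hvne hlaw (2 * k * Real.sqrt (x (g i)))
            rw [hs']
            simp only
            rw [hPs]
            apply ENNReal.ofReal_le_ofReal
            apply Phi_mono
            have hcoe : (((x (g i) - x (g i + 1)).toNNReal : ℝ)) = x (g i) - x (g i + 1) :=
              Real.coe_toNNReal _ hd.le
            rw [hcoe]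
            have hratio : Real.sqrt (x (g i)) / Real.sqrt (x (g i) - x (g i + 1))
                ≤ Real.sqrt 2 := by
              rw [← Real.sqrt_div (hx0 (g i)).le]
              apply Real.sqrt_le_sqrt
              rw [div_le_iff₀ hd]
              linarith [hxhalf (g i)]
            have hsq2 : (0:ℝ) ≤ Real.sqrt (x (g i)) / Real.sqrt (x (g i) - x (g i + 1)) := by
              positivity
            calc 2 * k * Real.sqrt (x (g i)) / Real.sqrt (x (g i) - x (g i + 1))
                = 2 * k * (Real.sqrt (x (g i)) / Real.sqrt (x (g i) - x (g i + 1))) := by ring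
              _ ≤ 2 * k * Real.sqrt 2 := by nlinarith
              _ = b := by rw [hb]
          calc ∏ i : Fin M, P (s' i) ≤ ∏ _i : Fin M, ENNReal.ofReal (Phi b) :=
              Finset.prod_le_prod' fun i _ => hfac i
            _ = ENNReal.ofReal (Phi b) ^ M := by
                rw [Finset.prod_const, Finset.card_univ, Fintype.card_fin]
            _ = ENNReal.ofReal ((Phi b) ^ M) := (ENNReal.ofReal_pow (Phi_nonneg b) M).symm
            _ ≤ ENNReal.ofReal (ζ / 2) := ENNReal.ofReal_le_ofReal hM.le
        -- sum term
        have hterm2 : P (⋃ i : Fin M, B (N + i.val)) ≤ ENNReal.ofReal (ζ / 2) := by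
          refine le_trans (measure_iUnion_fintype_le _ _) ?_
          have hBn : ∀ n : ℕ, P (B n) ≤ ENNReal.ofReal ((1/2 : ℝ) ^ (n + 2)) := by
            intro n
            have hvne : (x (n + 1)).toNNReal ≠ 0 := by
              rw [ne_eq, Real.toNNReal_eq_zero]
              push_neg
              exact hx0 (n + 1)
            have hlaw := hW.law (hx0 (n + 1))
            have hPB := gaussian_lt hvne hlaw (-(k * Real.sqrt (x n)))
            rw [hB]
            simp only
            rw [show {ω | W (x (n + 1)) ω < -(k * Real.sqrt (x n))}
              = (fun ω => W (x (n + 1)) ω) ⁻¹' Set.Iio (-(k * Real.sqrt (x n))) from rfl]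
            rw [hPB]
            apply ENNReal.ofReal_le_ofReal
            have hcoe : (((x (n + 1)).toNNReal : ℝ)) = x (n + 1) :=
              Real.coe_toNNReal _ (hx0 (n + 1)).le
            rw [hcoe]
            have hρ0 : (0:ℝ) < ρ n := by linarith [hρ2 n]
            have hratio : Real.sqrt (x n) / Real.sqrt (x (n + 1)) = Real.sqrt (ρ n) := by
              rw [← Real.sqrt_div (hx0 n).le]
              congr 1
              rw [hxsucc, div_div_eq_mul_div, mul_comm, mul_div_assoc,
                div_self (hx0 n).ne', mul_one]
            have harg : -(k * Real.sqrt (x n)) / Real.sqrt (x (n + 1))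
                = -(k * Real.sqrt (ρ n)) := by
              rw [neg_div, mul_div_assoc, hratio]
            rw [harg]
            exact hρPhi n
          calc ∑ i : Fin M, P (B (N + i.val))
              ≤ ∑ i : Fin M, ENNReal.ofReal ((1/2 : ℝ) ^ (N + i.val + 2)) :=
                Finset.sum_le_sum fun i _ => hBn (N + i.val)
            _ = ENNReal.ofReal (∑ i : Fin M, (1/2 : ℝ) ^ (N + i.val + 2)) :=
                (ENNReal.ofReal_sum_of_nonneg fun i _ => by positivity).symm
            _ ≤ ENNReal.ofReal (ζ / 2) := by
                apply ENNReal.ofReal_le_ofReal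
                have h1 : ∑ i : Fin M, (1/2 : ℝ) ^ (N + i.val + 2)
                    = (1/2 : ℝ) ^ (N + 2) * ∑ i ∈ Finset.range M, (1/2 : ℝ) ^ i := by
                  rw [Finset.mul_sum, ← Fin.sum_univ_eq_sum_range
                    (fun i => (1/2 : ℝ) ^ (N + 2) * (1/2 : ℝ) ^ i) M]
                  refine Finset.sum_congr rfl fun i _ => ?_
                  rw [← pow_add]
                  congr 1
                  omega
                have h2 : ∑ i ∈ Finset.range M, (1/2 : ℝ) ^ i ≤ 2 := by
                  rw [geom_sum_eq (by norm_num : (1/2 : ℝ) ≠ 1) M]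
                  rw [div_le_iff_of_neg (by norm_num : (1/2 : ℝ) - 1 < 0)]
                  have hp : (0:ℝ) ≤ (1/2 : ℝ) ^ M := by positivity
                  linarith
                have hpn : (0:ℝ) ≤ (1/2 : ℝ) ^ (N + 2) := by positivity
                have h3 : (1/2 : ℝ) ^ (N + 2) * 2 = (1/2 : ℝ) ^ (N + 1) := by
                  rw [pow_succ]
                  ring
                have h4 : (1/2 : ℝ) ^ (N + 1) ≤ (1/2 : ℝ) ^ N :=
                  pow_le_pow_of_le_one (by norm_num) (by norm_num) (by omega)
                have h5 : ∑ i : Fin M, (1/2 : ℝ) ^ (N + i.val + 2) ≤ (1/2 : ℝ) ^ N := by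
                  rw [h1]
                  nlinarith
                linarith
        calc P (⋂ i : Fin M, (A (N + i.val))ᶜ) + P (⋃ i : Fin M, B (N + i.val))
            ≤ ENNReal.ofReal (ζ / 2) + ENNReal.ofReal (ζ / 2) := add_le_add hterm1 hterm2
          _ = ENNReal.ofReal ζ := by
              rw [← ENNReal.ofReal_add (by linarith) (by linarith)]
              norm_num
      refine le_antisymm ?_ zero_le
      refine ENNReal.le_of_forall_pos_le_add fun ε hε _ => ?_
      rw [zero_add]
      calc P F ≤ ENNReal.ofReal (ε : ℝ) := key ε (by exact_mod_cast hε)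
        _ = (ε : ENNReal) := ENNReal.ofReal_coe_nnreal
    rw [ae_iff]
    refine measure_mono_null ?_ hPF
    intro ω hω
    simp only [Set.mem_setOf_eq] at hω
    push_neg at hω
    simp only [hF, Set.mem_setOf_eq]
    intro n
    exact hω (x n) (hx0 n) (hxlt n)
  have H2 : ∀ᵐ ω ∂P, ∀ K j : ℕ,
      ∃ y : ℝ, 0 < y ∧ y < 1 / (j + 1 : ℝ) ∧ ((K : ℝ) + 1) * Real.sqrt y ≤ W y ω :=
    ae_all_iff.2 fun K => ae_all_iff.2 fun j => main K j
  filter_upwards [H2] with ω hω K δ hδ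
  obtain ⟨j, hj⟩ := exists_nat_one_div_lt hδ
  obtain ⟨y, hy1, hy2, hy3⟩ := hω K j
  refine ⟨y, hy1, hy2.trans hj, le_trans ?_ hy3⟩
  have := Real.sqrt_nonneg y
  nlinarith

end OneArm

/-- Instability of undersmoothed Thompson sampling: almost surely, for any solution `Q`
of the `c = 0` one-armed ODE, the sampling probability
`π(t) = Φ((μ Q t + W_{Q t}) / (σ √(Q t)))` attains values at least `1 - η` and at most `η`
on every initial time interval `(0, ε)`. -/
theorem one_arm_instability {Ω : Type*} [MeasurableSpace Ω] (P : Measure Ω)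
    (W : ℝ → Ω → ℝ) (hW : IsStdBM P W) (μ σ η ε : ℝ) (hσ : 0 < σ)
    (hη : η ∈ Set.Ioo (0 : ℝ) 1) (hε : ε ∈ Set.Ioo (0 : ℝ) 1) :
    ∀ᵐ ω ∂P, ∀ Q : ℝ → ℝ,
      IsOneArmSol (fun x => W x ω) μ σ 0 Q →
      1 - η ≤ sSup ((fun t => Phi ((μ * Q t + W (Q t) ω) / (σ * Real.sqrt (Q t)))) ''
          Set.Ioo 0 ε) ∧
      sInf ((fun t => Phi ((μ * Q t + W (Q t) ω) / (σ * Real.sqrt (Q t)))) ''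
          Set.Ioo 0 ε) ≤ η := by
  have hup := OneArm.crossing hW
  have hdown := OneArm.crossing hW.neg
  filter_upwards [hup, hdown] with ω hupω hdownω
  intro Q hQ
  obtain ⟨hQc, hQm, hQ0, hQpos, -⟩ := hQ
  obtain ⟨hε0, hε1⟩ := hε
  obtain ⟨hη0, hη1⟩ := hη
  have hd : 0 < Q (ε / 2) := hQpos (ε / 2) ⟨by linarith, by linarith⟩
  have hIVT : Set.Ioo (0:ℝ) (Q (ε / 2)) ⊆ Q '' Set.Ioo 0 (ε / 2) := by
    have h := intermediate_value_Ioo (by linarith : (0:ℝ) ≤ ε / 2)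
      (hQc.mono (Set.Icc_subset_Icc le_rfl (by linarith)))
    rwa [hQ0] at h
  have hbddA : BddAbove ((fun t => Phi ((μ * Q t + W (Q t) ω) / (σ * Real.sqrt (Q t)))) ''
      Set.Ioo 0 ε) := by
    refine ⟨1, fun v hv => ?_⟩
    obtain ⟨t', -, rfl⟩ := hv
    exact OneArm.Phi_le_one _
  have hbddB : BddBelow ((fun t => Phi ((μ * Q t + W (Q t) ω) / (σ * Real.sqrt (Q t)))) ''
      Set.Ioo 0 ε) := by
    refine ⟨0, fun v hv => ?_⟩
    obtain ⟨t', -, rfl⟩ := hv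
    exact OneArm.Phi_nonneg _
  constructor
  · -- supremum part
    obtain ⟨y0, hy0⟩ := eventually_atTop.1
      (OneArm.tendsto_Phi_atTop.eventually (lt_mem_nhds (by linarith : 1 - η < 1)))
    obtain ⟨K, hK⟩ := exists_nat_ge (σ * y0 + |μ|)
    obtain ⟨y, hyp, hylt, hyW⟩ := hupω K (min (Q (ε / 2)) 1) (lt_min hd one_pos)
    have hyd : y < Q (ε / 2) := hylt.trans_le (min_le_left _ _)
    have hy1 : y ≤ 1 := (hylt.trans_le (min_le_right _ _)).le
    obtain ⟨t, ht, hQt⟩ := hIVT ⟨hyp, hyd⟩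
    have htε : t ∈ Set.Ioo (0:ℝ) ε := ⟨ht.1, by linarith [ht.2]⟩
    have hsy : 0 < Real.sqrt y := Real.sqrt_pos.2 hyp
    have hsy1 : Real.sqrt y ≤ 1 := Real.sqrt_le_one.2 hy1
    have hysq : Real.sqrt y * Real.sqrt y = y := Real.mul_self_sqrt hyp.le
    have hy_sqrt : y ≤ Real.sqrt y := by
      nlinarith [hysq, hsy1, Real.sqrt_nonneg y]
    have hnum : ((K:ℝ) - |μ|) * Real.sqrt y ≤ μ * y + W y ω := by
      have h1 : -(|μ| * Real.sqrt y) ≤ μ * y := by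
        nlinarith [mul_le_mul_of_nonneg_right (neg_abs_le μ) hyp.le,
          mul_le_mul_of_nonneg_left hy_sqrt (abs_nonneg μ)]
      nlinarith [hyW]
    have harg : y0 ≤ (μ * y + W y ω) / (σ * Real.sqrt y) := by
      have hden : 0 < σ * Real.sqrt y := by positivity
      have h2 : ((K:ℝ) - |μ|) * Real.sqrt y / (σ * Real.sqrt y) = ((K:ℝ) - |μ|) / σ := by
        rw [mul_comm ((K:ℝ) - |μ|) (Real.sqrt y), mul_comm σ (Real.sqrt y),
          mul_div_mul_left _ _ hsy.ne']
      have h3 : y0 ≤ ((K:ℝ) - |μ|) / σ := by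
        rw [le_div_iff₀ hσ]
        nlinarith
      calc y0 ≤ ((K:ℝ) - |μ|) / σ := h3
        _ = ((K:ℝ) - |μ|) * Real.sqrt y / (σ * Real.sqrt y) := h2.symm
        _ ≤ (μ * y + W y ω) / (σ * Real.sqrt y) := by gcongr
    have hval : 1 - η ≤ Phi ((μ * Q t + W (Q t) ω) / (σ * Real.sqrt (Q t))) := by
      rw [hQt]
      exact (hy0 _ harg).le
    exact hval.trans (le_csSup hbddA ⟨t, htε, rfl⟩)
  · -- infimum part
    obtain ⟨y1, hy1'⟩ := eventually_atBot.1
      (OneArm.tendsto_Phi_atBot.eventually (gt_mem_nhds hη0))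
    obtain ⟨K, hK⟩ := exists_nat_ge (|μ| - σ * y1)
    obtain ⟨y, hyp, hylt, hyW⟩ := hdownω K (min (Q (ε / 2)) 1) (lt_min hd one_pos)
    have hyd : y < Q (ε / 2) := hylt.trans_le (min_le_left _ _)
    have hy1 : y ≤ 1 := (hylt.trans_le (min_le_right _ _)).le
    obtain ⟨t, ht, hQt⟩ := hIVT ⟨hyp, hyd⟩
    have htε : t ∈ Set.Ioo (0:ℝ) ε := ⟨ht.1, by linarith [ht.2]⟩
    have hsy : 0 < Real.sqrt y := Real.sqrt_pos.2 hyp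
    have hsy1 : Real.sqrt y ≤ 1 := Real.sqrt_le_one.2 hy1
    have hysq : Real.sqrt y * Real.sqrt y = y := Real.mul_self_sqrt hyp.le
    have hyW' : W y ω ≤ -((K:ℝ) * Real.sqrt y) := by
      have : (K:ℝ) * Real.sqrt y ≤ -(W y ω) := hyW
      linarith
    have hy_sqrt : y ≤ Real.sqrt y := by
      nlinarith [hysq, hsy1, Real.sqrt_nonneg y]
    have hnum : μ * y + W y ω ≤ (|μ| - (K:ℝ)) * Real.sqrt y := by
      have h1 : μ * y ≤ |μ| * Real.sqrt y := by
        nlinarith [mul_le_mul_of_nonneg_right (le_abs_self μ) hyp.le,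
          mul_le_mul_of_nonneg_left hy_sqrt (abs_nonneg μ)]
      nlinarith
    have harg : (μ * y + W y ω) / (σ * Real.sqrt y) ≤ y1 := by
      have hden : 0 < σ * Real.sqrt y := by positivity
      have h2 : (|μ| - (K:ℝ)) * Real.sqrt y / (σ * Real.sqrt y) = (|μ| - (K:ℝ)) / σ := by
        rw [mul_comm (|μ| - (K:ℝ)) (Real.sqrt y), mul_comm σ (Real.sqrt y),
          mul_div_mul_left _ _ hsy.ne']
      have h3 : (|μ| - (K:ℝ)) / σ ≤ y1 := by
        rw [div_le_iff₀ hσ]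
        nlinarith
      calc (μ * y + W y ω) / (σ * Real.sqrt y)
          ≤ (|μ| - (K:ℝ)) * Real.sqrt y / (σ * Real.sqrt y) := by gcongr
        _ = (|μ| - (K:ℝ)) / σ := h2
        _ ≤ y1 := h3
    have hval : Phi ((μ * Q t + W (Q t) ω) / (σ * Real.sqrt (Q t))) ≤ η := by
      rw [hQt]
      exact (hy1' _ harg).le
    exact (csInf_le hbddB ⟨t, htε, rfl⟩).trans hval
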